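/- Let (A,∘) be a group together with a left action λ: (A,∘) → Sym(A) and a right action ρ of (A,∘) on A forming a matched pair (i.e. λ_a(b∘c) = λ_a(b)∘λ_{ρ_b(a)}(c), ρ_c(a∘b) = ρ_{λ_b(c)}(a)∘ρ_c(b), each λ_a and ρ_a a bijection) satisfying the compatibility a∘b = λ_a(b) ∘ ρ_b(a) for all a,b. Then the operation a·b := a ∘ λ_{a'}(b), where a' is the inverse of a in (A,∘), defines a group structure on A, and (A,·,∘) is a skew left brace. -/

import Mathlib

/-- From a matched pair of a group `(A,∘)` (written multiplicatively) with itself,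
compatible via `a∘b = λ_a(b) ∘ ρ_b(a)`, the operation `a·b := a ∘ λ_{a'}(b)` defines a
group structure on `A`, and `(A,·,∘)` is a skew left brace. -/
theorem matchedPair_gives_skewLeftBrace {A : Type*} [Group A]
    (lam rho : A → A → A)
    (hbijl : ∀ a, Function.Bijective (lam a))
    (hbijr : ∀ a, Function.Bijective (rho a))
    (hlam_one : ∀ b, lam 1 b = b)
    (hlam_act : ∀ a b c, lam (a * b) c = lam a (lam b c))
    (hrho_one : ∀ a, rho 1 a = a)
    (hrho_act : ∀ a b c, rho c (rho b a) = rho (b * c) a)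
    (hmp1 : ∀ a b c, lam a (b * c) = lam a b * lam (rho b a) c)
    (hmp2 : ∀ a b c, rho c (a * b) = rho (lam b c) a * rho c b)
    (hcompat : ∀ a b, a * b = lam a b * rho b a)
    (m : A → A → A) (hm : ∀ a b, m a b = a * lam a⁻¹ b) :
    (∀ a b c, m (m a b) c = m a (m b c)) ∧
    (∀ a, m 1 a = a ∧ m a 1 = a) ∧
    (∃ i : A → A, (∀ a, m a (i a) = 1 ∧ m (i a) a = 1) ∧
      (∀ a b c, a * m b c = m (m (a * b) (i a)) (a * c))) := by
  -- λ_{a⁻¹} is inverse to λ_a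
  have lam_cancel : ∀ a x, lam a⁻¹ (lam a x) = x := by
    intro a x; rw [← hlam_act, inv_mul_cancel, hlam_one]
  have lam_one_r : ∀ a, lam a 1 = 1 := by
    intro a
    have h := hmp1 a 1 1
    rw [one_mul, hrho_one] at h
    exact mul_eq_left.mp h.symm
  -- alternative formula for m
  have halt : ∀ a b, m a b = b * (rho b a⁻¹)⁻¹ := by
    intro a b
    have h : lam a⁻¹ b = a⁻¹ * b * (rho b a⁻¹)⁻¹ := by
      rw [hcompat a⁻¹ b]; group
    rw [hm, h]; group
  have hassoc : ∀ a b c, m (m a b) c = m a (m b c) := by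
    intro a b c
    have hinv : (m a b)⁻¹ = rho b a⁻¹ * b⁻¹ := by rw [halt]; group
    rw [hm (m a b) c, hinv, hm a (m b c), hm b c, hmp1 a⁻¹ b (lam b⁻¹ c),
      ← hlam_act, hm a b]
    group
  refine ⟨hassoc, ?_, ?_⟩
  · intro a
    constructor
    · rw [hm, inv_one, hlam_one, one_mul]
    · rw [hm, lam_one_r, mul_one]
  · refine ⟨fun a => lam a a⁻¹, fun a => ⟨?_, ?_⟩, ?_⟩
    · rw [hm, lam_cancel, mul_inv_cancel]
    · have h1 : (lam a a⁻¹)⁻¹ = rho a⁻¹ a := by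
        have h := hcompat a a⁻¹
        rw [mul_inv_cancel] at h
        exact (eq_inv_of_mul_eq_one_right h.symm).symm
      rw [halt, h1, hrho_act, inv_mul_cancel, hrho_one, mul_inv_cancel]
    · intro a b c
      have hu : m (a * b) (lam a a⁻¹) = a * b * lam b⁻¹ a⁻¹ := by
        rw [hm, mul_inv_rev, hlam_act, lam_cancel]
      have huinv : (a * b * lam b⁻¹ a⁻¹)⁻¹ = rho a⁻¹ b⁻¹ := by
        have h := hcompat b⁻¹ a⁻¹
        have : rho a⁻¹ b⁻¹ = (lam b⁻¹ a⁻¹)⁻¹ * (b⁻¹ * a⁻¹) := by rw [h]; group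
        rw [this]; group
      have hkey : lam b⁻¹ c = lam b⁻¹ a⁻¹ * lam (rho a⁻¹ b⁻¹) (a * c) := by
        have h := hmp1 b⁻¹ a⁻¹ (a * c)
        rw [← mul_assoc, inv_mul_cancel, one_mul] at h
        exact h
      rw [hu, hm (a * b * lam b⁻¹ a⁻¹), huinv, hm b c]
      rw [show a * (b * lam b⁻¹ c) = a * b * lam b⁻¹ c by group, hkey]
      group
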